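/- Let L ≥ 1 be a natural number, let ν^S, ν^I, ν^R be L×L matrices with nonnegative entries, let Q be the generator matrix with off-diagonal entries ν^I_{ℓℓ'} and p_{ℓℓ'}(t) := (exp(tQ))_{ℓℓ'}, let f : [0,∞) → [0,∞) be a continuous probability density with F(x) := ∫₀ˣ f(u)du and F^c := 1−F > 0 on [0,∞), and let ī₀ : [0,∞) → [0,∞)^L be continuous and integrable with Ī_ℓ(0) := ∫₀^∞ ī₀,ℓ(𝔞)d𝔞. Suppose (v, S̄, Ī, R̄) : [0,∞) → ℝ^{4L} is continuous with all components nonnegative and satisfies, for all t ≥ 0 and all ℓ: S̄_ℓ(t) = S̄_ℓ(0) − ∫₀ᵗ v_ℓ(s)ds + ∑_{ℓ'} ∫₀ᵗ (ν^S_{ℓ'ℓ} S̄_{ℓ'}(s) − ν^S_{ℓℓ'} S̄_ℓ(s))ds; Ī_ℓ(t) = Ī_ℓ(0) − ∑_{ℓ'} ∫₀^∞ (∫₀ᵗ p_{ℓ'ℓ}(u)·(f(u+𝔞)/F^c(𝔞))du)·ī₀,ℓ'(𝔞)d𝔞 + ∫₀ᵗ v_ℓ(s)ds − ∑_{ℓ'}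 ∫₀ᵗ (∫₀^{t−s} p_{ℓ'ℓ}(u)f(u)du)·v_{ℓ'}(s)ds + ∑_{ℓ'} ∫₀ᵗ (ν^I_{ℓ'ℓ} Ī_{ℓ'}(s) − ν^I_{ℓℓ'} Ī_ℓ(s))ds; R̄_ℓ(t) = R̄_ℓ(0) + ∑_{ℓ'} ∫₀^∞ (∫₀ᵗ p_{ℓ'ℓ}(u)·(f(u+𝔞)/F^c(𝔞))du)·ī₀,ℓ'(𝔞)d𝔞 + ∑_{ℓ'} ∫₀ᵗ (∫₀^{t−s} p_{ℓ'ℓ}(u)f(u)du)·v_{ℓ'}(s)ds + ∑_{ℓ'} ∫₀ᵗ (ν^R_{ℓ'ℓ} R̄_{ℓ'}(s) − ν^R_{ℓℓ'} R̄_ℓ(s))ds. Set B̄_ℓ := S̄_ℓ + Ī_ℓ + R̄_ℓ and c := max_ℓ ∑_{ℓ'≠ℓ} max(ν^S_{ℓℓ'}, ν^I_{ℓℓ'}, ν^R_{ℓℓ'}). Then B̄_ℓ(t) ≥ B̄_ℓ(0)·e^{−ct} for all t ≥ 0 and all ℓ. In particular, if B̄_ℓ(0) > 0 for every ℓ, then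 for each T > 0 there exists c_T > 0 such that B̄_ℓ(t) ≥ c_T for all t ∈ [0,T] and all ℓ. -/

import Mathlib

open Matrix intervalIntegral Set MeasureTheory

/-- The complementary c.d.f. `F^c = 1 - F` associated with the density `f` on `[0,∞)`,
where `F(x) = ∫₀ˣ f(u) du`. -/
noncomputable def survival (f : ℝ → ℝ) (x : ℝ) : ℝ := 1 - ∫ u in (0:ℝ)..x, f u

/-- **Key positivity estimate in the proof of Lemma 3.4**: the total patch masses
`B̄_ℓ = S̄_ℓ + Ī_ℓ + R̄_ℓ` of the FLLN limit system decay at most exponentially, hence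
remain bounded away from zero on compact time intervals. -/
theorem multiPatch_total_mass_lower_bound
    (L : ℕ) (hL : 1 ≤ L)
    (νS νI νR : Matrix (Fin L) (Fin L) ℝ)
    (hνS : ∀ ℓ ℓ', 0 ≤ νS ℓ ℓ') (hνI : ∀ ℓ ℓ', 0 ≤ νI ℓ ℓ')
    (hνR : ∀ ℓ ℓ', 0 ≤ νR ℓ ℓ')
    (Q : Matrix (Fin L) (Fin L) ℝ)
    (hQ_off : ∀ ℓ ℓ', ℓ ≠ ℓ' → Q ℓ ℓ' = νI ℓ ℓ')
    (hQ_diag : ∀ ℓ, Q ℓ ℓ = -∑ ℓ' ∈ Finset.univ.erase ℓ, νI ℓ ℓ')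
    (f : ℝ → ℝ) (hf_cont : Continuous f) (hf_nonneg : ∀ x, 0 ≤ f x)
    (hf_prob : ∫ u in Ioi (0:ℝ), f u = 1)
    (hFc_pos : ∀ x ≥ (0:ℝ), 0 < survival f x)
    (i₀ : ℝ → Fin L → ℝ) (hi₀_cont : ContinuousOn i₀ (Ici 0))
    (hi₀_nonneg : ∀ 𝔞 ≥ (0:ℝ), ∀ ℓ, 0 ≤ i₀ 𝔞 ℓ)
    (hi₀_int : IntegrableOn i₀ (Ioi 0))
    (v S I R : ℝ → Fin L → ℝ)
    (hv_cont : ContinuousOn v (Ici 0)) (hS_cont : ContinuousOn S (Ici 0))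
    (hI_cont : ContinuousOn I (Ici 0)) (hR_cont : ContinuousOn R (Ici 0))
    (hnonneg : ∀ t ≥ (0:ℝ), ∀ ℓ, 0 ≤ v t ℓ ∧ 0 ≤ S t ℓ ∧ 0 ≤ I t ℓ ∧ 0 ≤ R t ℓ)
    (heqS : ∀ t ≥ (0:ℝ), ∀ ℓ,
      S t ℓ = S 0 ℓ - (∫ s in (0:ℝ)..t, v s ℓ)
        + ∑ ℓ', ∫ s in (0:ℝ)..t, (νS ℓ' ℓ * S s ℓ' - νS ℓ ℓ' * S s ℓ))
    (heqI : ∀ t ≥ (0:ℝ), ∀ ℓ,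
      I t ℓ = (∫ 𝔞 in Ioi (0:ℝ), i₀ 𝔞 ℓ)
        - (∑ ℓ', ∫ 𝔞 in Ioi (0:ℝ),
            (∫ u in (0:ℝ)..t,
              NormedSpace.exp (u • Q) ℓ' ℓ * (f (u + 𝔞) / survival f 𝔞)) * i₀ 𝔞 ℓ')
        + (∫ s in (0:ℝ)..t, v s ℓ)
        - (∑ ℓ', ∫ s in (0:ℝ)..t,
            (∫ u in (0:ℝ)..(t - s), NormedSpace.exp (u • Q) ℓ' ℓ * f u) * v s ℓ')
        + ∑ ℓ', ∫ s in (0:ℝ)..t, (νI ℓ' ℓ * I s ℓ' - νI ℓ ℓ' * I s ℓ))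
    (heqR : ∀ t ≥ (0:ℝ), ∀ ℓ,
      R t ℓ = R 0 ℓ
        + (∑ ℓ', ∫ 𝔞 in Ioi (0:ℝ),
            (∫ u in (0:ℝ)..t,
              NormedSpace.exp (u • Q) ℓ' ℓ * (f (u + 𝔞) / survival f 𝔞)) * i₀ 𝔞 ℓ')
        + (∑ ℓ', ∫ s in (0:ℝ)..t,
            (∫ u in (0:ℝ)..(t - s), NormedSpace.exp (u • Q) ℓ' ℓ * f u) * v s ℓ')
        + ∑ ℓ', ∫ s in (0:ℝ)..t, (νR ℓ' ℓ * R s ℓ' - νR ℓ ℓ' * R s ℓ))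
    (hI0 : ∀ ℓ, I 0 ℓ = ∫ 𝔞 in Ioi (0:ℝ), i₀ 𝔞 ℓ) :
    (∀ t ≥ (0:ℝ), ∀ ℓ,
      (S 0 ℓ + I 0 ℓ + R 0 ℓ) *
          Real.exp (-(⨆ ℓ'' : Fin L, ∑ ℓ' ∈ Finset.univ.erase ℓ'',
            max (νS ℓ'' ℓ') (max (νI ℓ'' ℓ') (νR ℓ'' ℓ'))) * t)
        ≤ S t ℓ + I t ℓ + R t ℓ) ∧
    ((∀ ℓ, 0 < S 0 ℓ + I 0 ℓ + R 0 ℓ) →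
      ∀ T > (0:ℝ), ∃ cT > (0:ℝ), ∀ t ∈ Icc (0:ℝ) T, ∀ ℓ,
        cT ≤ S t ℓ + I t ℓ + R t ℓ) := by
    -- abbreviations
  have hℓ0 : (0 : ℕ) < L := hL
  set c := ⨆ ℓ'' : Fin L, ∑ ℓ' ∈ Finset.univ.erase ℓ'',
      max (νS ℓ'' ℓ') (max (νI ℓ'' ℓ') (νR ℓ'' ℓ')) with hc_def
  have hm_nonneg : ∀ ℓ'' : Fin L, (0:ℝ) ≤ ∑ ℓ' ∈ Finset.univ.erase ℓ'',
      max (νS ℓ'' ℓ') (max (νI ℓ'' ℓ') (νR ℓ'' ℓ')) := by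
    intro ℓ''
    apply Finset.sum_nonneg
    intro ℓ' _
    exact le_trans (hνS ℓ'' ℓ') (le_max_left _ _)
  have hbdd : BddAbove (Set.range fun ℓ'' : Fin L => ∑ ℓ' ∈ Finset.univ.erase ℓ'',
      max (νS ℓ'' ℓ') (max (νI ℓ'' ℓ') (νR ℓ'' ℓ'))) := (Set.finite_range _).bddAbove
  have hcge : ∀ ℓ'' : Fin L, (∑ ℓ' ∈ Finset.univ.erase ℓ'',
      max (νS ℓ'' ℓ') (max (νI ℓ'' ℓ') (νR ℓ'' ℓ'))) ≤ c := fun ℓ'' => le_ciSup hbdd ℓ''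
  have hc0 : 0 ≤ c := le_trans (hm_nonneg ⟨0, hℓ0⟩) (hcge ⟨0, hℓ0⟩)
  -- continuity of truncated evaluations
  have evalc : ∀ (X : ℝ → Fin L → ℝ), ContinuousOn X (Ici 0) → ∀ ℓ' : Fin L,
      Continuous (fun s : ℝ => X (max s 0) ℓ') := by
    intro X hX ℓ'
    exact (continuous_apply ℓ').comp
      (hX.comp_continuous (continuous_id.max continuous_const) (fun s => le_max_right s 0))
  -- the main estimate
  have main : ∀ t ≥ (0:ℝ), ∀ ℓ,
      (S 0 ℓ + I 0 ℓ + R 0 ℓ) * Real.exp (-c * t) ≤ S t ℓ + I t ℓ + R t ℓ := by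
    intro t₀ ht₀ ℓ
    -- the net flow into patch ℓ, with time truncated to `[0,∞)`
    set G : ℝ → ℝ := fun s => ∑ ℓ' : Fin L,
        ((νS ℓ' ℓ * S (max s 0) ℓ' - νS ℓ ℓ' * S (max s 0) ℓ)
          + (νI ℓ' ℓ * I (max s 0) ℓ' - νI ℓ ℓ' * I (max s 0) ℓ)
          + (νR ℓ' ℓ * R (max s 0) ℓ' - νR ℓ ℓ' * R (max s 0) ℓ)) with hG_def
    have hG_cont : Continuous G := by
      apply continuous_finset_sum
      intro ℓ' _
      exact (((continuous_const.mul (evalc S hS_cont ℓ')).sub (continuous_const.mul (evalc S hS_cont ℓ))).add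
        ((continuous_const.mul (evalc I hI_cont ℓ')).sub (continuous_const.mul (evalc I hI_cont ℓ)))).add
        ((continuous_const.mul (evalc R hR_cont ℓ')).sub (continuous_const.mul (evalc R hR_cont ℓ)))
    -- the key integral identity
    have key : ∀ t ≥ (0:ℝ), S t ℓ + I t ℓ + R t ℓ
        = (S 0 ℓ + I 0 ℓ + R 0 ℓ) + ∫ s in (0:ℝ)..t, G s := by
      intro t ht
      have hmax : ∀ s ∈ uIcc (0:ℝ) t, max s 0 = s := by
        intro s hs
        rw [uIcc_of_le ht] at hs
        exact max_eq_left hs.1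
      have hI1 : ∀ (X : ℝ → Fin L → ℝ), ContinuousOn X (Ici 0) →
          ∀ (ν : Matrix (Fin L) (Fin L) ℝ) (ℓ' : Fin L),
          IntervalIntegrable (fun s => ν ℓ' ℓ * X (max s 0) ℓ' - ν ℓ ℓ' * X (max s 0) ℓ)
            MeasureTheory.volume 0 t := by
        intro X hX ν ℓ'
        exact ((continuous_const.mul (evalc X hX ℓ')).sub (continuous_const.mul (evalc X hX ℓ))).intervalIntegrable 0 t
      have hcongr : ∀ (X : ℝ → Fin L → ℝ) (ν : Matrix (Fin L) (Fin L) ℝ) (ℓ' : Fin L),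
          (∫ s in (0:ℝ)..t, (ν ℓ' ℓ * X (max s 0) ℓ' - ν ℓ ℓ' * X (max s 0) ℓ))
          = ∫ s in (0:ℝ)..t, (ν ℓ' ℓ * X s ℓ' - ν ℓ ℓ' * X s ℓ) := by
        intro X ν ℓ'
        apply intervalIntegral.integral_congr
        intro s hs
        dsimp only
        rw [hmax s hs]
      have hsplit : (∫ s in (0:ℝ)..t, G s)
          = (∑ ℓ', ∫ s in (0:ℝ)..t, (νS ℓ' ℓ * S s ℓ' - νS ℓ ℓ' * S s ℓ))
            + (∑ ℓ', ∫ s in (0:ℝ)..t, (νI ℓ' ℓ * I s ℓ' - νI ℓ ℓ' * I s ℓ))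
            + (∑ ℓ', ∫ s in (0:ℝ)..t, (νR ℓ' ℓ * R s ℓ' - νR ℓ ℓ' * R s ℓ)) := by
        rw [hG_def]
        rw [intervalIntegral.integral_finset_sum]
        · rw [← Finset.sum_add_distrib, ← Finset.sum_add_distrib]
          apply Finset.sum_congr rfl
          intro ℓ' _
          rw [intervalIntegral.integral_add (((hI1 S hS_cont νS ℓ').add (hI1 I hI_cont νI ℓ')))
              (hI1 R hR_cont νR ℓ'),
            intervalIntegral.integral_add (hI1 S hS_cont νS ℓ') (hI1 I hI_cont νI ℓ'),
            hcongr S νS ℓ', hcongr I νI ℓ', hcongr R νR ℓ']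
        · intro ℓ' _
          exact ((hI1 S hS_cont νS ℓ').add (hI1 I hI_cont νI ℓ')).add (hI1 R hR_cont νR ℓ')
      have eS := heqS t ht ℓ
      have eI := heqI t ht ℓ
      have eR := heqR t ht ℓ
      have e0 := hI0 ℓ
      rw [hsplit]
      linarith
    -- `φ` agrees with `B ℓ` on `[0,∞)` and is differentiable everywhere
    set φ : ℝ → ℝ := fun t => (S 0 ℓ + I 0 ℓ + R 0 ℓ) + ∫ s in (0:ℝ)..t, G s with hφ_def
    have hφ : ∀ t : ℝ, HasDerivAt φ (G t) t := by
      intro t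
      apply HasDerivAt.const_add
      exact intervalIntegral.integral_hasDerivAt_right (hG_cont.intervalIntegrable 0 t)
        (hG_cont.aestronglyMeasurable.stronglyMeasurableAtFilter) hG_cont.continuousAt
    -- lower bound on G
    have hGge : ∀ t ≥ (0:ℝ), -(c * (S t ℓ + I t ℓ + R t ℓ)) ≤ G t := by
      intro t ht
      have hmax : max t 0 = t := max_eq_left ht
      have hB0 : 0 ≤ S t ℓ + I t ℓ + R t ℓ := by
        obtain ⟨_, h1, h2, h3⟩ := hnonneg t ht ℓ
        linarith
      have hG_eq : G t = ∑ ℓ' : Fin L,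
          ((νS ℓ' ℓ * S t ℓ' - νS ℓ ℓ' * S t ℓ)
            + (νI ℓ' ℓ * I t ℓ' - νI ℓ ℓ' * I t ℓ)
            + (νR ℓ' ℓ * R t ℓ' - νR ℓ ℓ' * R t ℓ)) := by
        rw [hG_def]; simp only [hmax]
      rw [hG_eq]
      rw [← Finset.sum_erase_add _ _ (Finset.mem_univ ℓ)]
      have hterm : (νS ℓ ℓ * S t ℓ - νS ℓ ℓ * S t ℓ)
            + (νI ℓ ℓ * I t ℓ - νI ℓ ℓ * I t ℓ)
            + (νR ℓ ℓ * R t ℓ - νR ℓ ℓ * R t ℓ) = 0 := by ring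
      rw [hterm, add_zero]
      have step1 : ∑ ℓ' ∈ Finset.univ.erase ℓ,
          (-(max (νS ℓ ℓ') (max (νI ℓ ℓ') (νR ℓ ℓ')) * (S t ℓ + I t ℓ + R t ℓ)))
          ≤ ∑ ℓ' ∈ Finset.univ.erase ℓ,
          ((νS ℓ' ℓ * S t ℓ' - νS ℓ ℓ' * S t ℓ)
            + (νI ℓ' ℓ * I t ℓ' - νI ℓ ℓ' * I t ℓ)
            + (νR ℓ' ℓ * R t ℓ' - νR ℓ ℓ' * R t ℓ)) := by
        apply Finset.sum_le_sum
        intro ℓ' _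
        obtain ⟨_, hS1, hI1', hR1⟩ := hnonneg t ht ℓ
        obtain ⟨_, hS2, hI2, hR2⟩ := hnonneg t ht ℓ'
        have m1 : νS ℓ ℓ' ≤ max (νS ℓ ℓ') (max (νI ℓ ℓ') (νR ℓ ℓ')) := le_max_left _ _
        have m2 : νI ℓ ℓ' ≤ max (νS ℓ ℓ') (max (νI ℓ ℓ') (νR ℓ ℓ')) :=
          le_trans (le_max_left _ _) (le_max_right _ _)
        have m3 : νR ℓ ℓ' ≤ max (νS ℓ ℓ') (max (νI ℓ ℓ') (νR ℓ ℓ')) :=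
          le_trans (le_max_right _ _) (le_max_right _ _)
        have b1 : νS ℓ ℓ' * S t ℓ ≤ max (νS ℓ ℓ') (max (νI ℓ ℓ') (νR ℓ ℓ')) * S t ℓ :=
          mul_le_mul_of_nonneg_right m1 hS1
        have b2 : νI ℓ ℓ' * I t ℓ ≤ max (νS ℓ ℓ') (max (νI ℓ ℓ') (νR ℓ ℓ')) * I t ℓ :=
          mul_le_mul_of_nonneg_right m2 hI1'
        have b3 : νR ℓ ℓ' * R t ℓ ≤ max (νS ℓ ℓ') (max (νI ℓ ℓ') (νR ℓ ℓ')) * R t ℓ :=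
          mul_le_mul_of_nonneg_right m3 hR1
        have p1 : 0 ≤ νS ℓ' ℓ * S t ℓ' := mul_nonneg (hνS ℓ' ℓ) hS2
        have p2 : 0 ≤ νI ℓ' ℓ * I t ℓ' := mul_nonneg (hνI ℓ' ℓ) hI2
        have p3 : 0 ≤ νR ℓ' ℓ * R t ℓ' := mul_nonneg (hνR ℓ' ℓ) hR2
        nlinarith
      have step2 : -(c * (S t ℓ + I t ℓ + R t ℓ)) ≤ ∑ ℓ' ∈ Finset.univ.erase ℓ,
          (-(max (νS ℓ ℓ') (max (νI ℓ ℓ') (νR ℓ ℓ')) * (S t ℓ + I t ℓ + R t ℓ))) := by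
        rw [Finset.sum_neg_distrib, neg_le_neg_iff, ← Finset.sum_mul]
        exact mul_le_mul_of_nonneg_right (hcge ℓ) hB0
      linarith
    -- Gronwall by monotonicity of ψ = φ · exp(c·)
    set ψ : ℝ → ℝ := fun t => φ t * Real.exp (c * t) with hψ_def
    have hψd : ∀ t : ℝ, HasDerivAt ψ ((G t + c * φ t) * Real.exp (c * t)) t := by
      intro t
      have h := (hφ t).mul ((HasDerivAt.const_mul c (hasDerivAt_id t)).exp)
      refine h.congr_deriv ?_
      simp only [id_eq, mul_one]
      ring
    have hmono : MonotoneOn ψ (Ici 0) := by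
      apply monotoneOn_of_deriv_nonneg (convex_Ici 0)
      · exact fun x _ => ((hψd x).differentiableAt.continuousAt).continuousWithinAt
      · exact fun x _ => (hψd x).differentiableAt.differentiableWithinAt
      · intro x hx
        rw [interior_Ici] at hx
        rw [(hψd x).deriv]
        have h1 := hGge x (le_of_lt hx)
        have h2 := key x (le_of_lt hx)
        have h3 : φ x = S x ℓ + I x ℓ + R x ℓ := by rw [h2]
        have he := Real.exp_pos (c * x)
        rw [h3]
        have : 0 ≤ G x + c * (S x ℓ + I x ℓ + R x ℓ) := by linarith
        exact mul_nonneg this he.le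
    have hψ0 : ψ 0 = S 0 ℓ + I 0 ℓ + R 0 ℓ := by
      simp [hψ_def, hφ_def]
    have hψt : ψ t₀ = (S t₀ ℓ + I t₀ ℓ + R t₀ ℓ) * Real.exp (c * t₀) := by
      have h3 : φ t₀ = S t₀ ℓ + I t₀ ℓ + R t₀ ℓ := by rw [key t₀ ht₀]
      show φ t₀ * Real.exp (c * t₀) = _
      rw [h3]
    have hle : ψ 0 ≤ ψ t₀ := hmono (self_mem_Ici) ht₀ ht₀
    rw [hψ0, hψt] at hle
    have he := Real.exp_pos (c * t₀)
    rw [neg_mul, Real.exp_neg]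
    rw [mul_inv_le_iff₀' he]
    linarith
  constructor
  · exact main
  · intro hpos T hT
    have hne : (Finset.univ : Finset (Fin L)).Nonempty := ⟨⟨0, hℓ0⟩, Finset.mem_univ _⟩
    set m := Finset.univ.inf' hne (fun ℓ => S 0 ℓ + I 0 ℓ + R 0 ℓ) with hm_def
    have hm_pos : 0 < m := by
      rw [hm_def, Finset.lt_inf'_iff]
      intro ℓ _
      exact hpos ℓ
    refine ⟨m * Real.exp (-c * T), mul_pos hm_pos (Real.exp_pos _), ?_⟩
    intro t ht ℓ
    have h1 := main t ht.1 ℓ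
    have h2 : m ≤ S 0 ℓ + I 0 ℓ + R 0 ℓ := Finset.inf'_le _ (Finset.mem_univ ℓ)
    have h3 : Real.exp (-c * T) ≤ Real.exp (-c * t) := by
      apply Real.exp_le_exp.2
      nlinarith [ht.2]
    calc m * Real.exp (-c * T) ≤ (S 0 ℓ + I 0 ℓ + R 0 ℓ) * Real.exp (-c * t) :=
          mul_le_mul h2 h3 (Real.exp_pos _).le (by linarith)
      _ ≤ S t ℓ + I t ℓ + R t ℓ := h1
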